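/- Let a = 1 and −1 < b < 0. Then there exists r > 0 such that for z = r·e^{iπ}, Im((z + 1)/(z^b + 1)) < 0; explicitly, Im((z+1)/(z^b+1)) = r^b(r − 1)·sin(bπ)/|z^b+1|², which is negative whenever r > 1 (since sin(bπ) < 0 gives the product r^b(r−1)sin(bπ) < 0; note sin(bπ) < 0 for −1 < b < 0). -/
import Mathlib

theorem stmt12 (b : ℝ) (hb1 : -1 < b) (hb0 : b < 0) :
    ∃ r : ℝ, 0 < r ∧ (((-(r:ℂ)) + 1) / ((-(r:ℂ)) ^ (b:ℂ) + 1)).im < 0 := by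
  refine ⟨2, by norm_num, ?_⟩
  have hcast : (-((2:ℝ):ℂ)) = ((-2:ℝ):ℂ) := by push_cast; ring
  have hlog : Complex.log ((-2:ℝ):ℂ) = Real.log 2 + Real.pi * Complex.I := by
    rw [Complex.log, Complex.arg_ofReal_of_neg (by norm_num : (-2:ℝ) < 0)]
    norm_num [mul_comm]
  have hexp : Complex.log ((-2:ℝ):ℂ) * (b:ℂ)
      = ((b * Real.log 2 : ℝ):ℂ) + ((b * Real.pi : ℝ):ℂ) * Complex.I := by
    rw [hlog]; push_cast; ring
  have hw : (((-2:ℝ):ℂ)) ^ (b:ℂ)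
      = Complex.exp (((b * Real.log 2 : ℝ):ℂ) + ((b * Real.pi : ℝ):ℂ) * Complex.I) := by
    rw [Complex.cpow_def_of_ne_zero (by norm_num), hexp]
  have hwim : ((((-2:ℝ):ℂ)) ^ (b:ℂ)).im = Real.exp (b * Real.log 2) * Real.sin (b * Real.pi) := by
    rw [hw, Complex.exp_im]
    simp only [Complex.add_re, Complex.add_im, Complex.ofReal_re, Complex.ofReal_im,
      Complex.mul_re, Complex.mul_im, Complex.I_re, Complex.I_im]
    ring_nf
  have hsin : Real.sin (b * Real.pi) < 0 := by
    apply Real.sin_neg_of_neg_of_neg_pi_lt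
    · exact mul_neg_of_neg_of_pos hb0 Real.pi_pos
    · nlinarith [Real.pi_pos]
  rw [hcast]
  set w : ℂ := (((-2:ℝ):ℂ)) ^ (b:ℂ) with hwdef
  have hdim : (w + 1).im = Real.exp (b * Real.log 2) * Real.sin (b * Real.pi) := by
    simp [Complex.add_im, hwim]
  have he := Real.exp_pos (b * Real.log 2)
  have hdne : w + 1 ≠ 0 := by
    intro h
    have h0 : (w+1).im = 0 := by rw [h]; simp
    rw [hdim] at h0
    nlinarith
  have hns : 0 < Complex.normSq (w + 1) := Complex.normSq_pos.mpr hdne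
  have hre : (((-2:ℝ):ℂ) + 1).re = -1 := by norm_num
  have him0 : (((-2:ℝ):ℂ) + 1).im = 0 := by simp
  rw [Complex.div_im, him0, hre, hdim]
  have hprod : 0 < Real.exp (b * Real.log 2) * Real.sin (b * Real.pi) / Complex.normSq (w+1) → False := by
    intro h; nlinarith [div_neg_of_neg_of_pos (mul_neg_of_pos_of_neg he hsin) hns]
  have : Real.exp (b * Real.log 2) * Real.sin (b * Real.pi) / Complex.normSq (w+1) < 0 :=
    div_neg_of_neg_of_pos (mul_neg_of_pos_of_neg he hsin) hns
  simp only [zero_mul, zero_div, zero_sub, neg_mul, one_mul]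
  have h2 : 0 < -(Real.exp (b * Real.log 2) * Real.sin (b * Real.pi)) := by nlinarith
  have h3 := div_pos h2 hns
  linarith
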